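/- Let A ∈ ℝ^{n×n} and b ∈ ℝⁿ, b ≠ 0. Suppose: (i) 𝒰_d ∈ ℝ^{n×d} has orthonormal columns and ℋ_d := 𝒰_d^T A 𝒰_d; (ii) U_d ∈ ℝ^{n×d}, u_{d+1} ∈ ℝⁿ, H_d ∈ ℝ^{d×d}, h_{d+1,d} ∈ ℝ satisfy A U_d = U_d H_d + h_{d+1,d} u_{d+1} e_d^T; (iii) U_d = 𝒰_d 𝒯_d with 𝒯_d upper triangular and invertible, 𝒯_d e₁ = e₁, and τ̂_d the (d,d) entry of 𝒯_d. Let r ∈ ℝ^d and set r̂ := (𝒯_d r − h_{d+1,d} 𝒰_d^T u_{d+1}) / τ̂_d. Assume ℋ_d + r̂ e_d^T (viewed over ℂ) is diagonalizable: ℋ_d + r̂ e_d^T = X Λ X^{-1}, Λ = diag(λ₁,…,λ_d), and set α_i = e_d^T X e_i, β_i = e_i^T X^{-1} e₁. Then for every polynomial p ∈ ℂ[X], the sketched FOM approximation f_d^sk := U_d p(H_d + r e_d^T) e₁ ‖b‖ and the full FOM approximation f_d^fom := 𝒰_d p(ℋ_d) e₁ ‖b‖ satisfy f_d^sk − f_d^fom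 = 𝒰_d (Σ_{i=1}^d α_i β_i · p[ℋ_d, λ_i]) r̂ · ‖b‖. -/

import Mathlib

open Matrix

/-- Euclidean norm of a vector in `ℝ^m`. -/
noncomputable def eunorm {m : ℕ} (v : Fin m → ℝ) : ℝ := Real.sqrt (∑ i, (v i) ^ 2)

/-- The first-order divided-difference polynomial `p[·, λ] = (p - p(λ)) / (X - λ)`
(exact division in `ℂ[X]`). -/
noncomputable def divDiffPoly (p : Polynomial ℂ) (lam : ℂ) : Polynomial ℂ :=
  (p - Polynomial.C (p.eval lam)) / (Polynomial.X - Polynomial.C lam)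

open Polynomial

section helpers

lemma divDiffPoly_eq (p q : ℂ[X]) (lam : ℂ)
    (hq : (X - C lam) * q = p - C (p.eval lam)) : divDiffPoly p lam = q := by
  rw [divDiffPoly, ← hq, mul_div_cancel_left₀ _ (X_sub_C_ne_zero lam)]

lemma divDiffPoly_C (a lam : ℂ) : divDiffPoly (C a) lam = 0 :=
  divDiffPoly_eq _ _ _ (by simp)

lemma divDiffPoly_add (p q : ℂ[X]) (lam : ℂ) :
    divDiffPoly (p + q) lam = divDiffPoly p lam + divDiffPoly q lam := by
  have hdvd : ∀ r : ℂ[X], (X - C lam) * divDiffPoly r lam = r - C (r.eval lam) := by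
    intro r
    obtain ⟨s, hs⟩ := dvd_iff_isRoot.mpr (show IsRoot (r - C (r.eval lam)) lam by simp)
    rw [divDiffPoly_eq r s lam hs.symm, ← hs]
  refine divDiffPoly_eq _ _ _ ?_
  rw [mul_add, hdvd, hdvd]
  simp only [eval_add, C_add]
  ring

lemma divDiffPoly_spec (p : ℂ[X]) (lam : ℂ) :
    (X - C lam) * divDiffPoly p lam = p - C (p.eval lam) := by
  obtain ⟨s, hs⟩ := dvd_iff_isRoot.mpr (show IsRoot (p - C (p.eval lam)) lam by simp)
  rw [divDiffPoly_eq p s lam hs.symm, ← hs]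

lemma divDiffPoly_X_mul (q : ℂ[X]) (lam : ℂ) :
    divDiffPoly (X * q) lam = X * divDiffPoly q lam + C (q.eval lam) := by
  refine divDiffPoly_eq _ _ _ ?_
  have h := divDiffPoly_spec q lam
  rw [eval_mul, eval_X, C_mul]
  linear_combination Polynomial.X * h

lemma aeval_intertwine {A : Type*} [Ring A] [Algebra ℂ A] (G T D : A)
    (hGT : G * T = T * D) (p : ℂ[X]) :
    aeval G p * T = T * aeval D p := by
  have hpow : ∀ k : ℕ, G ^ k * T = T * D ^ k := by
    intro k
    induction k with
    | zero => simp
    | succ k ih => rw [pow_succ, pow_succ, mul_assoc, hGT, ← mul_assoc, ih, mul_assoc]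
  induction p using Polynomial.induction_on' with
  | add p q hp hq => simp [add_mul, mul_add, hp, hq]
  | monomial n a =>
      rw [aeval_monomial, aeval_monomial, mul_assoc, hpow, ← mul_assoc,
        Algebra.commutes a T, mul_assoc]

lemma aeval_diagonal' {m : Type*} [Fintype m] [DecidableEq m] (f : m → ℂ) (p : ℂ[X]) :
    aeval (diagonal f) p = diagonal (fun i => p.eval (f i)) := by
  induction p using Polynomial.induction_on' with
  | add p q hp hq => simp [hp, hq, diagonal_add]
  | monomial n a =>
      ext i j
      simp only [aeval_monomial, Matrix.algebraMap_eq_diagonal, diagonal_pow,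
        diagonal_mul_diagonal, diagonal_apply, eval_monomial, Pi.pow_apply]
      split_ifs with h
      · subst h; simp [Pi.algebraMap_apply]
      · rfl

set_option linter.unusedSectionVars false
variable {l m o : Type*} [Fintype l] [Fintype m] [Fintype o] [DecidableEq m]
variable {α : Type*} [CommRing α]

lemma mul_vecMulVec (M : Matrix l m α) (v : m → α) (w : o → α) :
    M * vecMulVec v w = vecMulVec (M *ᵥ v) w := by
  ext i j
  simp [Matrix.mul_apply, vecMulVec_apply, mulVec, dotProduct, Finset.sum_mul, mul_assoc]

lemma vecMulVec_mul (v : l → α) (w : m → α) (M : Matrix m o α) :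
    vecMulVec v w * M = vecMulVec v (w ᵥ* M) := by
  ext i j
  simp [Matrix.mul_apply, vecMulVec_apply, vecMul, dotProduct, Finset.mul_sum, mul_assoc]

lemma vecMulVec_mulVec (v : l → α) (w : m → α) (x : m → α) :
    vecMulVec v w *ᵥ x = (w ⬝ᵥ x) • v := by
  ext i
  simp only [mulVec, dotProduct, vecMulVec_apply, Pi.smul_apply, smul_eq_mul, Finset.sum_mul]
  exact Finset.sum_congr rfl fun j _ => by ring

lemma vecMulVec_sub_left (v v' : l → α) (w : o → α) :
    vecMulVec (v - v') w = vecMulVec v w - vecMulVec v' w := by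
  ext i j; simp [vecMulVec_apply, sub_mul]

lemma vecMulVec_smul_left (a : α) (v : l → α) (w : o → α) :
    vecMulVec (a • v) w = a • vecMulVec v w := by
  ext i j; simp [vecMulVec_apply, mul_assoc]

lemma vecMulVec_map (f : ℝ →+* ℂ) (v : l → ℝ) (w : o → ℝ) :
    (vecMulVec v w).map f = vecMulVec (fun i => f (v i)) (fun j => f (w j)) := by
  ext i j; simp [vecMulVec_apply]

end helpers

section key

variable {m : Type*} [Fintype m] [DecidableEq m]

lemma scalar_mulVec (s : ℂ) (v : m → ℂ) :
    (algebraMap ℂ (Matrix m m ℂ) s) *ᵥ v = s • v := by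
  rw [Algebra.algebraMap_eq_smul_one, smul_mulVec, one_mulVec]

lemma key_identity (Hm : Matrix m m ℂ) (rh ed e1 : m → ℂ) (γ Λ : m → ℂ)
    (hs : ∀ q : ℂ[X], ed ⬝ᵥ ((aeval (Hm + vecMulVec rh ed) q) *ᵥ e1)
        = ∑ i, γ i * q.eval (Λ i)) (p : ℂ[X]) :
    (aeval (Hm + vecMulVec rh ed) p) *ᵥ e1 - (aeval Hm p) *ᵥ e1
      = (∑ i, γ i • aeval Hm (divDiffPoly p (Λ i))) *ᵥ rh := by
  set G := Hm + vecMulVec rh ed with hG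
  have hstep : ∀ q : ℂ[X],
      ((aeval G q) *ᵥ e1 - (aeval Hm q) *ᵥ e1
        = (∑ i, γ i • aeval Hm (divDiffPoly q (Λ i))) *ᵥ rh) →
      ((aeval G (X * q)) *ᵥ e1 - (aeval Hm (X * q)) *ᵥ e1
        = (∑ i, γ i • aeval Hm (divDiffPoly (X * q) (Λ i))) *ᵥ rh) := by
    intro q IH
    have hR : (∑ i, γ i • aeval Hm (divDiffPoly (X * q) (Λ i)))
        = Hm * (∑ i, γ i • aeval Hm (divDiffPoly q (Λ i)))
          + algebraMap ℂ _ (∑ i, γ i * q.eval (Λ i)) := by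
      rw [Finset.mul_sum, map_sum]
      rw [← Finset.sum_add_distrib]
      refine Finset.sum_congr rfl fun i _ => ?_
      rw [divDiffPoly_X_mul, map_add, _root_.map_mul, aeval_X, aeval_C, smul_add,
        ← mul_smul_comm]
      congr 1
      rw [Algebra.smul_def, ← _root_.map_mul]
    rw [hR, add_mulVec, scalar_mulVec, ← Matrix.mulVec_mulVec, ← IH,
      Matrix.mulVec_sub]
    have hL : (aeval G (X * q)) *ᵥ e1
        = Hm *ᵥ ((aeval G q) *ᵥ e1) + (∑ i, γ i * q.eval (Λ i)) • rh := by
      rw [_root_.map_mul, aeval_X, ← Matrix.mulVec_mulVec]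
      nth_rewrite 1 [hG]
      rw [add_mulVec, _root_.vecMulVec_mulVec, hs q]
    have hL2 : (aeval Hm (X * q)) *ᵥ e1 = Hm *ᵥ ((aeval Hm q) *ᵥ e1) := by
      rw [_root_.map_mul, aeval_X, ← Matrix.mulVec_mulVec]
    rw [hL, hL2]
    abel
  induction p using Polynomial.induction_on with
  | C a => simp [divDiffPoly_C]
  | add p q hp hq =>
      simp only [map_add, add_mulVec, divDiffPoly_add, smul_add,
        Finset.sum_add_distrib] at *
      rw [← hp, ← hq]
      abel
  | monomial n a IH =>
      have : (C a * X ^ (n + 1) : ℂ[X]) = X * (C a * X ^ n) := by ring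
      rw [this]
      exact hstep _ IH

end key


/-- **Corollary 6.1 (polynomial version): sketched vs. full FOM.**
With `ℋ = cUᵀ A cU`, `A U = U H + h u e_dᵀ`, `U = cU cT` (`cT` upper triangular,
invertible, `cT e₁ = e₁`, `(d,d)` entry `τ̂`), `r̂ = (cT r - h cUᵀ u)/τ̂`, and a
diagonalization `ℋ + r̂ e_dᵀ = X Λ X⁻¹` over `ℂ` with `α_i = e_dᵀ X e_i`,
`β_i = e_iᵀ X⁻¹ e₁`, the sketched FOM approximation `U p(H + r e_dᵀ) e₁ ‖b‖` and
the full FOM approximation `cU p(ℋ) e₁ ‖b‖` differ by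
`cU (∑ i α_i β_i p[ℋ, λ_i]) r̂ ‖b‖`.  (The paper's `d` is `d+1` here.) -/
theorem sketched_minus_full_fom
    {n d : ℕ}
    (A : Matrix (Fin n) (Fin n) ℝ) (b : Fin n → ℝ) (hb : b ≠ 0)
    (cU : Matrix (Fin n) (Fin (d + 1)) ℝ) (hcU : cUᵀ * cU = 1)
    (U : Matrix (Fin n) (Fin (d + 1)) ℝ) (u : Fin n → ℝ)
    (H : Matrix (Fin (d + 1)) (Fin (d + 1)) ℝ) (h : ℝ)
    (hrel : A * U = U * H + h • vecMulVec u (Pi.single (Fin.last d) 1 : Fin (d + 1) → ℝ))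
    (cT : Matrix (Fin (d + 1)) (Fin (d + 1)) ℝ)
    (hcTupper : ∀ i j : Fin (d + 1), j < i → cT i j = 0)
    (hcTdet : cT.det ≠ 0)
    (hcTe1 : cT.mulVec (Pi.single 0 1 : Fin (d + 1) → ℝ) = (Pi.single 0 1 : Fin (d + 1) → ℝ))
    (hU : U = cU * cT)
    (r rhat : Fin (d + 1) → ℝ)
    (hrhat : rhat = (cT (Fin.last d) (Fin.last d))⁻¹ • (cT.mulVec r - h • cUᵀ.mulVec u))
    (Xe : Matrix (Fin (d + 1)) (Fin (d + 1)) ℂ) (Λ : Fin (d + 1) → ℂ)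
    (hXe : IsUnit Xe.det)
    (hdiag : (cUᵀ * A * cU).map Complex.ofReal
        + vecMulVec (fun i => (rhat i : ℂ)) (Pi.single (Fin.last d) 1 : Fin (d + 1) → ℂ)
      = Xe * diagonal Λ * Xe⁻¹)
    (p : Polynomial ℂ) :
    eunorm b • ((U.map Complex.ofReal).mulVec
        ((Polynomial.aeval (H.map Complex.ofReal +
            vecMulVec (fun i => (r i : ℂ)) (Pi.single (Fin.last d) 1 : Fin (d + 1) → ℂ)) p).mulVec
          (Pi.single 0 1 : Fin (d + 1) → ℂ)))
      - eunorm b • ((cU.map Complex.ofReal).mulVec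
        ((Polynomial.aeval ((cUᵀ * A * cU).map Complex.ofReal) p).mulVec
          (Pi.single 0 1 : Fin (d + 1) → ℂ)))
    = eunorm b • ((cU.map Complex.ofReal).mulVec
        ((∑ i, (Xe (Fin.last d) i * Xe⁻¹ i 0) •
            Polynomial.aeval ((cUᵀ * A * cU).map Complex.ofReal) (divDiffPoly p (Λ i))).mulVec
          (fun i => (rhat i : ℂ)))) := by
  classical
  have hcoe : ⇑Complex.ofRealHom = Complex.ofReal := rfl
  -- abbreviations
  set ed : Fin (d + 1) → ℝ := (Pi.single (Fin.last d) 1 : Fin (d + 1) → ℝ) with hed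
  set edc : Fin (d + 1) → ℂ := (Pi.single (Fin.last d) 1 : Fin (d + 1) → ℂ) with hedc
  set e1c : Fin (d + 1) → ℂ := (Pi.single 0 1 : Fin (d + 1) → ℂ) with he1c
  have hsingle_last : (fun i => ((ed i : ℝ) : ℂ)) = edc := by
    funext j
    rcases eq_or_ne j (Fin.last d) with hj | hj
    · subst hj; simp [hed, hedc]
    · simp [hed, hedc, Pi.single_eq_of_ne hj]
  have hsingle_0 : (fun i => (((Pi.single 0 1 : Fin (d + 1) → ℝ)) i : ℂ)) = e1c := by
    funext j
    rcases eq_or_ne j 0 with hj | hj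
    · subst hj; simp [he1c]
    · simp [he1c, Pi.single_eq_of_ne hj]
  -- τ ≠ 0
  have hτ : cT (Fin.last d) (Fin.last d) ≠ 0 := by
    have hdet : cT.det = ∏ i, cT i i :=
      Matrix.det_of_upperTriangular (fun i j hij => hcTupper i j hij)
    rw [hdet] at hcTdet
    exact Finset.prod_ne_zero_iff.mp hcTdet _ (Finset.mem_univ _)
  have hτr : cT (Fin.last d) (Fin.last d) • rhat = cT *ᵥ r - h • (cUᵀ *ᵥ u) := by
    rw [hrhat, smul_smul, mul_inv_cancel₀ hτ, one_smul]
  -- real-level Arnoldi-type relation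
  have hA' : (cUᵀ * A * cU) * cT = cT * H + h • vecMulVec (cUᵀ *ᵥ u) ed := by
    have h1 : cUᵀ * (A * U) = cUᵀ * (U * H) + cUᵀ * (h • vecMulVec u ed) := by
      rw [hrel, Matrix.mul_add]
    rw [hU, Matrix.mul_smul, _root_.mul_vecMulVec] at h1
    simp only [← Matrix.mul_assoc] at h1
    rwa [hcU, Matrix.one_mul] at h1
  -- row of cT
  have hrow : ed ᵥ* cT = Pi.single (Fin.last d) (cT (Fin.last d) (Fin.last d)) := by
    rw [hed, Matrix.single_one_vecMul]
    funext j
    rcases eq_or_ne j (Fin.last d) with hj | hj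
    · subst hj; simp
    · rw [Pi.single_eq_of_ne hj]
      exact hcTupper _ j (lt_of_le_of_ne (Fin.le_last j) hj)
  -- real-level similarity relation
  have hGT : ((cUᵀ * A * cU) + vecMulVec rhat ed) * cT = cT * (H + vecMulVec r ed) := by
    rw [Matrix.add_mul, Matrix.mul_add, hA', _root_.vecMulVec_mul, hrow, _root_.mul_vecMulVec]
    have h2 : vecMulVec rhat (Pi.single (Fin.last d) (cT (Fin.last d) (Fin.last d)))
        = vecMulVec (cT (Fin.last d) (Fin.last d) • rhat) ed := by
      ext i j
      rcases eq_or_ne j (Fin.last d) with hj | hj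
      · subst hj; simp [vecMulVec_apply, hed, mul_comm]
      · simp [vecMulVec_apply, hed, Pi.single_eq_of_ne hj]
    rw [h2, hτr, vecMulVec_sub_left, vecMulVec_smul_left]
    abel
  -- complexify
  set ℋc := (cUᵀ * A * cU).map Complex.ofReal with hHc
  set cTc := cT.map Complex.ofReal with hcTc
  set Hcc := H.map Complex.ofReal with hHcc
  set rhc : Fin (d + 1) → ℂ := fun i => (rhat i : ℂ) with hrhc
  set rc : Fin (d + 1) → ℂ := fun i => (r i : ℂ) with hrc
  have mapmul : ∀ (M N : Matrix (Fin (d+1)) (Fin (d+1)) ℝ),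
      (M * N).map Complex.ofReal = M.map Complex.ofReal * N.map Complex.ofReal := by
    intro M N; rw [← hcoe]; exact Matrix.map_mul
  have mapadd : ∀ (M N : Matrix (Fin (d+1)) (Fin (d+1)) ℝ),
      (M + N).map Complex.ofReal = M.map Complex.ofReal + N.map Complex.ofReal := by
    intro M N
    exact Matrix.map_add Complex.ofReal (fun a b => Complex.ofReal_add a b) M N
  have mapvmv : ∀ (v w : Fin (d+1) → ℝ),
      (vecMulVec v w).map Complex.ofReal
        = vecMulVec (fun i => ((v i : ℝ) : ℂ)) (fun j => ((w j : ℝ) : ℂ)) := by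
    intro v w; rw [← hcoe]; exact vecMulVec_map Complex.ofRealHom v w
  have hGTc : (ℋc + vecMulVec rhc edc) * cTc = cTc * (Hcc + vecMulVec rc edc) := by
    have h1 := congrArg (fun M : Matrix (Fin (d+1)) (Fin (d+1)) ℝ =>
      M.map Complex.ofReal) hGT
    simp only [mapmul, mapadd, mapvmv, hsingle_last] at h1
    exact h1
  have hcTe1c : cTc *ᵥ e1c = e1c := by
    have h1 : cTc *ᵥ (fun i => (((Pi.single 0 1 : Fin (d + 1) → ℝ)) i : ℂ))
        = fun i => (((Pi.single 0 1 : Fin (d + 1) → ℝ)) i : ℂ) := by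
      funext i
      rw [hcTc, ← hcoe,
        show (fun j => Complex.ofRealHom (((Pi.single 0 1 : Fin (d + 1) → ℝ)) j))
          = ⇑Complex.ofRealHom ∘ (Pi.single 0 1 : Fin (d + 1) → ℝ) from rfl,
        ← RingHom.map_mulVec, hcTe1]
    rwa [hsingle_0] at h1
  have hUc : U.map Complex.ofReal = cU.map Complex.ofReal * cTc := by
    rw [hU]
    rw [← hcoe]; exact Matrix.map_mul
  -- diagonalization consequences
  set Gc := ℋc + vecMulVec rhc edc with hGc
  have hGX : Gc * Xe = Xe * diagonal Λ := by
    rw [hdiag, Matrix.mul_assoc, Matrix.nonsing_inv_mul _ hXe, Matrix.mul_one]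
  have hs : ∀ q : Polynomial ℂ,
      edc ⬝ᵥ ((Polynomial.aeval Gc q) *ᵥ e1c)
        = ∑ i, (Xe (Fin.last d) i * Xe⁻¹ i 0) * q.eval (Λ i) := by
    intro q
    have h1 := aeval_intertwine Gc Xe (diagonal Λ) hGX q
    rw [aeval_diagonal'] at h1
    have h2 : Polynomial.aeval Gc q = Xe * diagonal (fun i => q.eval (Λ i)) * Xe⁻¹ := by
      have h3 : Polynomial.aeval Gc q * (Xe * Xe⁻¹)
          = Xe * diagonal (fun i => q.eval (Λ i)) * Xe⁻¹ := by
        rw [← Matrix.mul_assoc, h1]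
      rwa [Matrix.mul_nonsing_inv _ hXe, Matrix.mul_one] at h3
    rw [h2, he1c, hedc]
    simp only [Matrix.mulVec_single, mul_one, single_dotProduct, one_mul, MulOpposite.op_one, one_smul, Matrix.col_apply]
    rw [Matrix.mul_apply]
    refine Finset.sum_congr rfl fun k _ => ?_
    rw [Matrix.mul_diagonal]
    ring
  have hkey : (Polynomial.aeval (ℋc + vecMulVec rhc edc) p) *ᵥ e1c
        - (Polynomial.aeval ℋc p) *ᵥ e1c
      = (∑ i, (Xe (Fin.last d) i * Xe⁻¹ i 0) •
          Polynomial.aeval ℋc (divDiffPoly p (Λ i))) *ᵥ rhc :=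
    key_identity ℋc rhc edc e1c (fun i => Xe (Fin.last d) i * Xe⁻¹ i 0) Λ hs p
  -- assemble
  rw [← smul_sub]
  congr 1
  set Mc := Hcc + vecMulVec rc edc with hMc
  have hcomm : Polynomial.aeval Gc p * cTc = cTc * Polynomial.aeval Mc p :=
    aeval_intertwine Gc cTc Mc hGTc p
  have hfin : (U.map Complex.ofReal) *ᵥ ((Polynomial.aeval Mc p) *ᵥ e1c)
      = (cU.map Complex.ofReal) *ᵥ ((Polynomial.aeval Gc p) *ᵥ e1c) := by
    rw [hUc, ← Matrix.mulVec_mulVec,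
      Matrix.mulVec_mulVec e1c cTc (Polynomial.aeval Mc p), ← hcomm,
      ← Matrix.mulVec_mulVec e1c (Polynomial.aeval Gc p) cTc, hcTe1c]
  rw [hfin, ← Matrix.mulVec_sub, hkey]
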